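/- If Ω ⊆ ℝ_b^X is totally bounded with respect to the sup-norm metric, then the pseudo-metric space X_Ω = (X, D_X^Ω) is totally bounded. -/
import Mathlib

open scoped ENNReal

variable {X : Type*}

/-- A function is bounded. -/
def Bdd (f : X → ℝ) : Prop := ∃ C, ∀ x, |f x| ≤ C

/-- Extended sup-norm distance on functions. -/
noncomputable def supDist (f g : X → ℝ) : ℝ≥0∞ := ⨆ x, edist (f x) (g x)

/-- Pseudo-metric on X induced by a family Ω. -/
noncomputable def DX (Ω : Set (X → ℝ)) (x y : X) : ℝ≥0∞ := ⨆ ω ∈ Ω, edist (ω x) (ω y)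

noncomputable def pemX (Ω : Set (X → ℝ)) : PseudoEMetricSpace X where
  edist := DX Ω
  edist_self x := by simp [DX]
  edist_comm x y := by simp [DX, edist_comm]
  edist_triangle x y z := by
    refine iSup₂_le fun ω hω => ?_
    refine le_trans (edist_triangle (ω x) (ω y) (ω z)) (add_le_add ?_ ?_)
    · exact le_iSup₂ (f := fun ω (_ : ω ∈ Ω) => edist (ω x) (ω y)) ω hω
    · exact le_iSup₂ (f := fun ω (_ : ω ∈ Ω) => edist (ω y) (ω z)) ω hω

noncomputable def DAut (Ω : Set (X → ℝ)) (s₁ s₂ : X ≃ X) : ℝ≥0∞ :=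
  ⨆ ω ∈ Ω, supDist (ω ∘ s₁) (ω ∘ s₂)

noncomputable def pemAut (Ω : Set (X → ℝ)) : PseudoEMetricSpace (X ≃ X) where
  edist := DAut Ω
  edist_self s := by simp [DAut, supDist]
  edist_comm s t := by simp [DAut, supDist, edist_comm]
  edist_triangle r s t := by
    refine iSup₂_le fun ω hω => iSup_le fun x => ?_
    refine le_trans (edist_triangle (ω (r x)) (ω (s x)) (ω (t x))) (add_le_add ?_ ?_)
    · exact le_trans (le_iSup (fun x => edist ((ω ∘ r) x) ((ω ∘ s) x)) x)
        (le_iSup₂ (f := fun ω (_ : ω ∈ Ω) => supDist (ω ∘ r) (ω ∘ s)) ω hω)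
    · exact le_trans (le_iSup (fun x => edist ((ω ∘ s) x) ((ω ∘ t) x)) x)
        (le_iSup₂ (f := fun ω (_ : ω ∈ Ω) => supDist (ω ∘ s) (ω ∘ t)) ω hω)

def IsOperation (Φ Φ' : Set (X → ℝ)) (s : X ≃ X) : Prop := ∀ φ ∈ Φ, (φ ∘ s) ∈ Φ'


/-- Ω is totally bounded with respect to the sup-norm distance. -/
def TotBddFns (Ω : Set (X → ℝ)) : Prop :=
  ∀ ε : ℝ≥0∞, 0 < ε → ∃ T : Set (X → ℝ), T.Finite ∧ ∀ ω ∈ Ω, ∃ τ ∈ T, supDist ω τ < ε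

theorem statement3 (Ω : Set (X → ℝ)) (hb : ∀ ω ∈ Ω, Bdd ω) (h : TotBddFns Ω) :
    @TotallyBounded X (pemX Ω).toUniformSpace Set.univ := by
  letI : PseudoEMetricSpace X := pemX Ω
  rw [EMetric.totallyBounded_iff]
  intro ε hε
  obtain ⟨c, hc0, hcε⟩ := exists_between hε
  have hcTop : c ≠ ⊤ := hcε.ne_top
  set δ : ℝ≥0∞ := c / 3 with hδdef
  have hδ0 : 0 < δ := ENNReal.div_pos hc0.ne' (by norm_num)
  have hδtop : δ ≠ ⊤ := by
    simp [hδdef, ENNReal.div_eq_top, hcTop]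
  have h3δ : δ + δ + δ = c := ENNReal.add_thirds c
  obtain ⟨T, hTfin, hT⟩ := h δ hδ0
  -- restrict to bounded members of T
  set T₂ : Set (X → ℝ) := {τ ∈ T | Bdd τ} with hT₂def
  have hT₂fin : T₂.Finite := hTfin.subset (Set.sep_subset _ _)
  have hT₂ : ∀ ω ∈ Ω, ∃ τ ∈ T₂, supDist ω τ < δ := by
    intro ω hω
    obtain ⟨τ, hτT, hτ⟩ := hT ω hω
    refine ⟨τ, ⟨hτT, ?_⟩, hτ⟩
    obtain ⟨C, hC⟩ := hb ω hω
    refine ⟨C + δ.toReal, fun x => ?_⟩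
    have h1 : edist (ω x) (τ x) < δ :=
      lt_of_le_of_lt (le_iSup (fun x => edist (ω x) (τ x)) x) hτ
    have h2 : dist (ω x) (τ x) ≤ δ.toReal := by
      rw [edist_dist] at h1
      exact le_of_lt ((ENNReal.ofReal_lt_iff_lt_toReal dist_nonneg hδtop).1 h1)
    calc |τ x| ≤ |ω x| + |τ x - ω x| := by
            have := abs_add_le (ω x) (τ x - ω x); simpa using this
      _ ≤ C + δ.toReal := add_le_add (hC x) (by rw [abs_sub_comm]; exact h2)
  haveI : Fintype ↥T₂ := hT₂fin.fintype
  -- choose bounds for each τ ∈ T₂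
  choose C hC using fun τ : ↥T₂ => τ.2.2
  -- map X into ℝ^{T₂}
  set F : X → (↥T₂ → ℝ) := fun x τ => τ.1 x with hFdef
  have hSub : Set.range F ⊆ Set.univ.pi fun τ : ↥T₂ => Set.Icc (-(C τ)) (C τ) := by
    rintro _ ⟨x, rfl⟩ τ _
    exact abs_le.1 (hC τ x)
  have hTB : TotallyBounded (Set.range F) :=
    TotallyBounded.subset hSub
      (IsCompact.totallyBounded (isCompact_univ_pi fun τ => isCompact_Icc))
  obtain ⟨t, hts, htfin, hcov⟩ := EMetric.totallyBounded_iff'.1 hTB δ hδ0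
  choose g hg using fun (y : (↥T₂ → ℝ)) (hy : y ∈ t) => hts hy
  -- pull back net points
  classical
  haveI := htfin.to_subtype
  refine ⟨Set.range (fun y : t => g y.1 y.2), Set.finite_range _, ?_⟩
  intro x _
  have hx : F x ∈ ⋃ y ∈ t, EMetric.ball y δ := hcov ⟨x, rfl⟩
  simp only [Set.mem_iUnion, EMetric.mem_ball] at hx
  obtain ⟨y, hy, hxy⟩ := hx
  refine Set.mem_iUnion₂.2 ⟨g y hy, ⟨⟨y, hy⟩, rfl⟩, ?_⟩
  -- show edist x (g y hy) < ε where edist = DX Ω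
  have hFg : F (g y hy) = y := hg y hy
  have key : ∀ τ : ↥T₂, edist (τ.1 x) (τ.1 (g y hy)) < δ := by
    intro τ
    have h1 : edist (F x) (F (g y hy)) < δ := by rw [hFg]; exact hxy
    exact lt_of_le_of_lt (edist_le_pi_edist (F x) (F (g y hy)) τ) h1
  show DX Ω x (g y hy) < ε
  have hle : DX Ω x (g y hy) ≤ c := by
    refine iSup₂_le fun ω hω => ?_
    obtain ⟨τ, hτ₂, hτ⟩ := hT₂ ω hω
    have e1 : edist (ω x) (τ x) < δ :=
      lt_of_le_of_lt (le_iSup (fun x => edist (ω x) (τ x)) x) hτ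
    have e2 : edist (τ x) (τ (g y hy)) < δ := key ⟨τ, hτ₂⟩
    have e3 : edist (τ (g y hy)) (ω (g y hy)) < δ := by
      rw [edist_comm]
      exact lt_of_le_of_lt (le_iSup (fun x => edist (ω x) (τ x)) (g y hy)) hτ
    calc edist (ω x) (ω (g y hy))
        ≤ edist (ω x) (τ x) + edist (τ x) (τ (g y hy)) + edist (τ (g y hy)) (ω (g y hy)) :=
          edist_triangle4 _ _ _ _
      _ ≤ δ + δ + δ := add_le_add (add_le_add e1.le e2.le) e3.le
      _ = c := h3δ
  exact lt_of_le_of_lt hle hcε
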